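/- The space of eigenfunctions of eigenvalue 1 for Δ_F on (ℂⁿ, flat metric, F = -|z|²) with n ≥ 2 is infinite dimensional: the functions u_k(z) = z₂ᵏ·z̄₁ for k ∈ ℕ are linearly independent and each satisfies Δ_F u_k = -u_k. -/

import Mathlib

open Complex

/-- Wirtinger derivative `∂u/∂zᵢ`. -/
noncomputable def wz {n : ℕ} (u : (Fin n → ℂ) → ℂ) (i : Fin n) (z : Fin n → ℂ) : ℂ :=
  (fderiv ℝ u z (Pi.single i 1) - Complex.I * fderiv ℝ u z (Pi.single i Complex.I)) / 2

/-- Conjugate Wirtinger derivative `∂u/∂z̄ᵢ`. -/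
noncomputable def wzbar {n : ℕ} (u : (Fin n → ℂ) → ℂ) (i : Fin n) (z : Fin n → ℂ) : ℂ :=
  (fderiv ℝ u z (Pi.single i 1) + Complex.I * fderiv ℝ u z (Pi.single i Complex.I)) / 2

/-- Weighted `∂̄`-Laplacian with weight `F` on flat `ℂⁿ`. -/
noncomputable def wlapC {n : ℕ} (F u : (Fin n → ℂ) → ℂ) (z : Fin n → ℂ) : ℂ :=
  ∑ i, wz (wzbar u i) i z + ∑ i, wz F i z * wzbar u i z

section Aux

open ContinuousLinearMap

variable {n : ℕ}

theorem aux_hpow (j : Fin n) (k : ℕ) (z : Fin n → ℂ) :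
    HasFDerivAt (fun z : Fin n → ℂ => (z j) ^ k)
      ((((1 : ℂ →L[ℂ] ℂ).smulRight ((k : ℂ) * z j ^ (k - 1))).restrictScalars ℝ).comp
        (proj j : (Fin n → ℂ) →L[ℝ] ℂ)) z :=
  (((hasDerivAt_pow k (z j)).hasFDerivAt).restrictScalars ℝ).comp z (hasFDerivAt_apply j z)

theorem aux_hconj (i : Fin n) (z : Fin n → ℂ) :
    HasFDerivAt (fun z : Fin n → ℂ => (starRingEnd ℂ) (z i))
      ((((starL' ℝ : ℂ ≃L[ℝ] ℂ) : ℂ →L[ℝ] ℂ)).comp (proj i : (Fin n → ℂ) →L[ℝ] ℂ)) z :=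
  (hasFDerivAt_apply i z).star

theorem aux_huk (j i : Fin n) (k : ℕ) (z : Fin n → ℂ) :
    HasFDerivAt (fun z : Fin n → ℂ => (z j) ^ k * (starRingEnd ℂ) (z i))
      ((z j ^ k) • ((((starL' ℝ : ℂ ≃L[ℝ] ℂ) : ℂ →L[ℝ] ℂ)).comp (proj i : (Fin n → ℂ) →L[ℝ] ℂ))
        + (starRingEnd ℂ) (z i) •
          ((((1 : ℂ →L[ℂ] ℂ).smulRight ((k : ℂ) * z j ^ (k - 1))).restrictScalars ℝ).comp
            (proj j : (Fin n → ℂ) →L[ℝ] ℂ))) z :=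
  (aux_hpow j k z).mul (aux_hconj i z)

theorem aux_fderiv_uk (j i i' : Fin n) (k : ℕ) (z : Fin n → ℂ) (c : ℂ) :
    fderiv ℝ (fun z : Fin n → ℂ => (z j) ^ k * (starRingEnd ℂ) (z i)) z (Pi.single i' c)
    = z j ^ k * (starRingEnd ℂ) (if i = i' then c else 0)
      + (starRingEnd ℂ) (z i) * ((if j = i' then c else 0) * ((k : ℂ) * z j ^ (k-1))) := by
  rw [(aux_huk j i k z).fderiv]
  simp [Pi.single_apply, mul_comm]

theorem aux_wzbar_uk (j i0 : Fin n) (hji : j ≠ i0) (k : ℕ) (i : Fin n) (z : Fin n → ℂ) :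
    wzbar (fun z : Fin n → ℂ => (z j) ^ k * (starRingEnd ℂ) (z i0)) i z
      = if i = i0 then z j ^ k else 0 := by
  unfold wzbar
  rw [aux_fderiv_uk, aux_fderiv_uk]
  by_cases h0 : i = i0
  · subst h0
    simp [hji, Complex.conj_I]
    ring_nf
    rw [Complex.I_sq]
    ring
  · by_cases hj : j = i
    · subst hj
      rw [if_neg h0]
      simp [Ne.symm h0]
      ring_nf
      rw [Complex.I_sq]
      ring
    · simp [h0, Ne.symm h0, hj, Ne.symm hj]

theorem aux_fderiv_pow (j i' : Fin n) (k : ℕ) (z : Fin n → ℂ) (c : ℂ) :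
    fderiv ℝ (fun z : Fin n → ℂ => (z j) ^ k) z (Pi.single i' c)
      = (if j = i' then c else 0) * ((k : ℂ) * z j ^ (k-1)) := by
  rw [(aux_hpow j k z).fderiv]
  simp [Pi.single_apply, mul_comm]

theorem aux_hF (z : Fin n → ℂ) :
    HasFDerivAt (fun z : Fin n → ℂ => -∑ j, z j * (starRingEnd ℂ) (z j))
      (-∑ j, ((z j) • ((((starL' ℝ : ℂ ≃L[ℝ] ℂ) : ℂ →L[ℝ] ℂ)).comp
          (proj j : (Fin n → ℂ) →L[ℝ] ℂ))
        + (starRingEnd ℂ) (z j) • (proj j : (Fin n → ℂ) →L[ℝ] ℂ))) z :=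
  (HasFDerivAt.fun_sum fun j _ => (hasFDerivAt_apply j z).mul (aux_hconj j z)).neg

theorem aux_wz_F (i : Fin n) (z : Fin n → ℂ) :
    wz (fun z : Fin n → ℂ => -∑ j, z j * (starRingEnd ℂ) (z j)) i z
      = -(starRingEnd ℂ) (z i) := by
  unfold wz
  rw [(aux_hF z).fderiv]
  simp [Pi.single_apply, apply_ite (starRingEnd ℂ), Finset.sum_add_distrib, Finset.sum_ite_eq', Complex.conj_I]
  ring_nf
  rw [Complex.I_sq]
  ring

end Aux

/-- On `(ℂⁿ, flat, F = -|z|²)` with `n ≥ 2`, the 1-eigenspace of `Δ_F` is infinite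
dimensional: the functions `u_k(z) = z₂ᵏ z̄₁`, `k ∈ ℕ`, are linearly independent and
each satisfies `Δ_F u_k = -u_k`. -/
theorem stmt6 (n : ℕ) (hn : 2 ≤ n)
    (F : (Fin n → ℂ) → ℂ) (hF : ∀ z, F z = -∑ i, z i * starRingEnd ℂ (z i))
    (u : ℕ → (Fin n → ℂ) → ℂ)
    (hu : ∀ k z, u k z = (z ⟨1, by omega⟩) ^ k * starRingEnd ℂ (z ⟨0, by omega⟩)) :
    LinearIndependent ℂ u ∧ ∀ k z, wlapC F (u k) z = -(u k z) := by
  set i1 : Fin n := ⟨1, by omega⟩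
  set i0 : Fin n := ⟨0, by omega⟩
  have h10 : i1 ≠ i0 := by simp [i0, i1, Fin.ext_iff]
  obtain rfl : F = fun z => -∑ i, z i * starRingEnd ℂ (z i) := funext hF
  obtain rfl : u = fun k (z : Fin n → ℂ) => (z i1) ^ k * starRingEnd ℂ (z i0) :=
    funext fun k => funext (hu k)
  constructor
  · rw [linearIndependent_iff']
    intro s g hg m hm
    set p : Polynomial ℂ := ∑ k ∈ s, Polynomial.C (g k) * Polynomial.X ^ k with hp
    have hpz : p = 0 := by
      apply Polynomial.funext
      intro t
      have := congrFun hg (fun j => if j = i1 then t else if j = i0 then 1 else 0)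
      simp only [Finset.sum_apply, Pi.smul_apply, smul_eq_mul, Pi.zero_apply] at this
      simp only [if_pos rfl, if_neg h10.symm, if_pos rfl] at this
      simpa [hp, Polynomial.eval_finset_sum] using this
    have := congrArg (fun q => Polynomial.coeff q m) hpz
    simpa [hp, Polynomial.finset_sum_coeff, Polynomial.coeff_C_mul, Polynomial.coeff_X_pow,
      Finset.sum_ite_eq' s m, hm] using this
  · intro k z
    unfold wlapC
    have hwzbar : ∀ i z', wzbar (fun z : Fin n → ℂ => (z i1) ^ k * starRingEnd ℂ (z i0)) i z'
        = if i = i0 then z' i1 ^ k else 0 := aux_wzbar_uk i1 i0 h10 k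
    have h1 : ∀ i : Fin n,
        wz (wzbar (fun z : Fin n → ℂ => (z i1) ^ k * starRingEnd ℂ (z i0)) i) i z = 0 := by
      intro i
      by_cases h0 : i = i0
      · subst h0
        have : wzbar (fun z : Fin n → ℂ => (z i1) ^ k * starRingEnd ℂ (z i0)) i0
            = fun z' : Fin n → ℂ => z' i1 ^ k := funext fun z' => by simp [hwzbar]
        rw [this]
        unfold wz
        rw [aux_fderiv_pow, aux_fderiv_pow]
        simp [h10]
      · have : wzbar (fun z : Fin n → ℂ => (z i1) ^ k * starRingEnd ℂ (z i0)) i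
            = fun _ : Fin n → ℂ => (0 : ℂ) := funext fun z' => by simp [hwzbar, h0]
        rw [this]
        unfold wz
        simp [fderiv_const]
    rw [Finset.sum_congr rfl fun i _ => h1 i]
    simp only [Finset.sum_const_zero, zero_add]
    have h2 : ∀ i : Fin n,
        wz (fun z : Fin n → ℂ => -∑ j, z j * starRingEnd ℂ (z j)) i z
          * wzbar (fun z : Fin n → ℂ => (z i1) ^ k * starRingEnd ℂ (z i0)) i z
        = if i = i0 then -(starRingEnd ℂ) (z i0) * z i1 ^ k else 0 := by
      intro i
      rw [aux_wz_F, hwzbar]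
      by_cases h0 : i = i0 <;> simp [h0]
    rw [Finset.sum_congr rfl fun i _ => h2 i, Finset.sum_ite_eq' Finset.univ i0]
    simp
    ring
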